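/- Let r ∈ ℝ and let C : [r,∞) → ℝ be continuous. Define φ(t) = ∫_r^t exp(−C(l)) dl, assume ∫_t^∞ exp(C(s)) ds < ∞ for every t ≥ r, and set δ := sup_{t ≥ r} φ(t)·∫_t^∞ exp(C(s)) ds, assumed finite. Then for every l > r, the integral ∫_l^∞ exp(C(s))·√(φ(s)) ds is finite and satisfies ∫_l^∞ exp(C(s))·√(φ(s)) ds ≤ 2δ/√(φ(l)). -/

import Mathlib

open MeasureTheory

/-- Integration-by-parts estimate in the proof of the final Corollary of
Section 3.3: with `φ(t) = ∫_r^t exp(-C(l)) dl`, `G(t) = ∫_t^∞ exp(C(s)) ds`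
finite, and `δ = sup_{t ≥ r} φ(t)·G(t)` finite, for every `l > r` the integral
`∫_l^∞ exp(C(s))·√(φ(s)) ds` is finite and bounded by `2δ/√(φ(l))`. -/
theorem stmt15 (r : ℝ) (C : ℝ → ℝ) (hC : ContinuousOn C (Set.Ici r))
    (hG : ∀ t : ℝ, r ≤ t → IntegrableOn (fun s => Real.exp (C s)) (Set.Ici t) volume)
    (δ : ℝ)
    (hbdd : BddAbove (Set.range fun t : {t : ℝ // r ≤ t} =>
      (∫ l in r..(t : ℝ), Real.exp (-C l)) * ∫ s in Set.Ici (t : ℝ), Real.exp (C s)))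
    (hδ : δ = ⨆ t : {t : ℝ // r ≤ t},
      (∫ l in r..(t : ℝ), Real.exp (-C l)) * ∫ s in Set.Ici (t : ℝ), Real.exp (C s)) :
    ∀ l : ℝ, r < l →
      IntegrableOn
        (fun s => Real.exp (C s) * Real.sqrt (∫ u in r..s, Real.exp (-C u)))
        (Set.Ici l) volume ∧
      (∫ s in Set.Ici l, Real.exp (C s) * Real.sqrt (∫ u in r..s, Real.exp (-C u)))
        ≤ 2 * δ / Real.sqrt (∫ u in r..l, Real.exp (-C u)) := by
  intro l hl
  set E : ℝ → ℝ := fun s => Real.exp (C s) with hE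
  set φ : ℝ → ℝ := fun s => ∫ u in r..s, Real.exp (-C u) with hφ
  set G : ℝ → ℝ := fun t => ∫ s in Set.Ici t, E s with hGdef
  -- basic continuity facts
  have hEcont : ContinuousOn E (Set.Ici r) := Real.continuous_exp.comp_continuousOn hC
  have hE'cont : ContinuousOn (fun s => Real.exp (-C s)) (Set.Ici r) :=
    Real.continuous_exp.comp_continuousOn hC.neg
  have hEint : ∀ a b : ℝ, r ≤ a → r ≤ b → IntervalIntegrable E volume a b := by
    intro a b ha hb
    refine (hEcont.mono ?_).intervalIntegrable
    exact fun x hx => (le_inf ha hb).trans hx.1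
  have hE'int : ∀ a b : ℝ, r ≤ a → r ≤ b → IntervalIntegrable (fun s => Real.exp (-C s)) volume a b := by
    intro a b ha hb
    refine (hE'cont.mono ?_).intervalIntegrable
    exact fun x hx => (le_inf ha hb).trans hx.1
  -- sup bound
  have hsup : ∀ s : ℝ, r ≤ s → φ s * G s ≤ δ := by
    intro s hs
    rw [hδ]
    exact le_ciSup hbdd ⟨s, hs⟩
  have hφ0 : φ r = 0 := intervalIntegral.integral_same
  have hδ0 : 0 ≤ δ := by
    have := hsup r le_rfl
    rw [hφ0, zero_mul] at this
    exact this
  have hφnonneg : ∀ s : ℝ, r ≤ s → 0 ≤ φ s := fun s hs =>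
    intervalIntegral.integral_nonneg hs (fun u _ => (Real.exp_pos _).le)
  have hφl : 0 < φ l :=
    intervalIntegral.intervalIntegral_pos_of_pos_on (hE'int r l le_rfl hl.le)
      (fun x _ => Real.exp_pos _) hl
  -- positivity of G
  have hGpos : ∀ t : ℝ, r ≤ t → 0 < G t := by
    intro t ht
    rw [hGdef]
    rw [setIntegral_pos_iff_support_of_nonneg_ae
      (Filter.Eventually.of_forall fun x => (Real.exp_pos _).le) (hG t ht)]
    have : Function.support E = Set.univ := by
      ext x; simp [hE, (Real.exp_pos _).ne']
    rw [this, Set.univ_inter]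
    simp [Real.volume_Ici]
  -- decomposition of G
  have hGsplit : ∀ a b : ℝ, r ≤ a → a ≤ b → G a = (∫ s in a..b, E s) + G b := by
    intro a b ha hab
    have hdisj : Disjoint (Set.Ico a b) (Set.Ici b) := by
      apply Set.disjoint_left.mpr
      rintro x ⟨_, hx2⟩ hx3
      exact absurd hx3 (not_le.mpr hx2)
    have hunion : Set.Ico a b ∪ Set.Ici b = Set.Ici a := Set.Ico_union_Ici_eq_Ici hab
    have h1 : IntegrableOn E (Set.Ico a b) volume :=
      (hG a ha).mono_set (by rw [← hunion]; exact Set.subset_union_left)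
    have := setIntegral_union hdisj measurableSet_Ici h1 (hG b (ha.trans hab))
    rw [hunion] at this
    rw [hGdef]
    simp only
    rw [this, intervalIntegral.integral_of_le hab, MeasureTheory.integral_Ioc_eq_integral_Ioo, MeasureTheory.integral_Ico_eq_integral_Ioo]
  -- derivative of G
  have hGderiv : ∀ x : ℝ, r < x → HasDerivAt G (-(E x)) x := by
    intro x hx
    set a := (r + x) / 2 with ha
    have hra : r < a := by rw [ha]; linarith
    have hax : a < x := by rw [ha]; linarith
    have hmeas : StronglyMeasurableAtFilter E (nhds x) :=
      ⟨Set.Ici r, Ici_mem_nhds (hra.trans hax), hEcont.aestronglyMeasurable measurableSet_Ici⟩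
    have hcx : ContinuousAt E x :=
      hEcont.continuousAt (Ici_mem_nhds (hra.trans hax))
    have hd : HasDerivAt (fun u => G a - ∫ s in a..u, E s) (-(E x)) x := by
      have := (intervalIntegral.integral_hasDerivAt_right (hEint a x hra.le (hra.trans hax).le)
        hmeas hcx).const_sub (G a)
      simpa using this
    apply hd.congr_of_eventuallyEq
    filter_upwards [Ioi_mem_nhds hax] with u hu
    have := hGsplit a u hra.le (le_of_lt hu)
    rw [this]; ring
  -- G tends to 0 at infinity
  have hGtendsto : Filter.Tendsto G Filter.atTop (nhds 0) := by
    have h1 : Filter.Tendsto (fun t => ∫ s in l..t, E s) Filter.atTop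
        (nhds (∫ s in Set.Ioi l, E s)) :=
      intervalIntegral_tendsto_integral_Ioi l ((hG l hl.le).mono_set Set.Ioi_subset_Ici_self)
        Filter.tendsto_id
    have h2 : (∫ s in Set.Ioi l, E s) = G l := (integral_Ici_eq_integral_Ioi).symm
    rw [h2] at h1
    have h3 : Filter.Tendsto (fun t => G l - ∫ s in l..t, E s) Filter.atTop (nhds (G l - G l)) :=
      (tendsto_const_nhds).sub h1
    rw [sub_self] at h3
    apply h3.congr'
    filter_upwards [Filter.Ici_mem_atTop l] with t ht
    rw [hGsplit l t hl.le ht]; ring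
  -- g and its derivative
  set g : ℝ → ℝ := fun s => -2 * Real.sqrt (G s) with hg
  set g' : ℝ → ℝ := fun s => E s / Real.sqrt (G s) with hg'
  have hgderiv : ∀ x : ℝ, x ∈ Set.Ici l → HasDerivAt g (g' x) x := by
    intro x hx
    have hrx : r < x := hl.trans_le hx
    have h1 : HasDerivAt Real.sqrt (1 / (2 * Real.sqrt (G x))) (G x) :=
      Real.hasDerivAt_sqrt (hGpos x hrx.le).ne'
    have h2 : HasDerivAt (fun s => Real.sqrt (G s)) (1 / (2 * Real.sqrt (G x)) * (-(E x))) x :=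
      h1.comp x (hGderiv x hrx)
    have h3 := h2.const_mul (-2 : ℝ)
    convert h3 using 1
    have hs : Real.sqrt (G x) ≠ 0 := (Real.sqrt_pos.mpr (hGpos x hrx.le)).ne'
    show E x / Real.sqrt (G x) = _
    rw [one_div, mul_inv]
    ring
    all_goals rfl
  have hgtendsto : Filter.Tendsto g Filter.atTop (nhds 0) := by
    have : Filter.Tendsto (fun t => Real.sqrt (G t)) Filter.atTop (nhds (Real.sqrt 0)) :=
      (Real.continuous_sqrt.tendsto 0).comp hGtendsto
    have h2 := this.const_mul (-2 : ℝ)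
    simpa [hg] using h2
  have hg'nonneg : ∀ x ∈ Set.Ioi l, 0 ≤ g' x := by
    intro x _
    exact div_nonneg (Real.exp_pos _).le (Real.sqrt_nonneg _)
  have hgcont : ContinuousWithinAt g (Set.Ici l) l :=
    (hgderiv l Set.self_mem_Ici).continuousAt.continuousWithinAt
  have hg'int : IntegrableOn g' (Set.Ioi l) volume :=
    integrableOn_Ioi_deriv_of_nonneg hgcont (fun x hx => hgderiv x (Set.mem_Ici.mpr (le_of_lt hx))) hg'nonneg
      hgtendsto
  have hg'val : (∫ x in Set.Ioi l, g' x) = 2 * Real.sqrt (G l) := by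
    rw [integral_Ioi_of_hasDerivAt_of_tendsto hgcont (fun x hx => hgderiv x (Set.mem_Ici.mpr (le_of_lt hx)))
      hg'int hgtendsto]
    rw [hg]; ring
  -- pointwise bound
  have hpt : ∀ s : ℝ, r ≤ s → E s * Real.sqrt (φ s) ≤ Real.sqrt δ * g' s := by
    intro s hs
    have hGs := hGpos s hs
    have h1 : φ s ≤ δ / G s := (le_div_iff₀ hGs).mpr (hsup s hs)
    have h2 : Real.sqrt (φ s) ≤ Real.sqrt (δ / G s) := Real.sqrt_le_sqrt h1
    have h3 : Real.sqrt (δ / G s) = Real.sqrt δ / Real.sqrt (G s) := Real.sqrt_div hδ0 _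
    calc E s * Real.sqrt (φ s) ≤ E s * (Real.sqrt δ / Real.sqrt (G s)) := by
          apply mul_le_mul_of_nonneg_left (h3 ▸ h2) (Real.exp_pos _).le
      _ = Real.sqrt δ * g' s := by rw [hg']; ring
  -- measurability of the target
  have hφcont : ContinuousOn φ (Set.Ici l) := by
    intro x hx
    have hrx : r < x := hl.trans_le hx
    have hmeas : StronglyMeasurableAtFilter (fun s => Real.exp (-C s)) (nhds x) :=
      ⟨Set.Ici r, Ici_mem_nhds hrx, hE'cont.aestronglyMeasurable measurableSet_Ici⟩
    have hcx : ContinuousAt (fun s => Real.exp (-C s)) x :=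
      hE'cont.continuousAt (Ici_mem_nhds hrx)
    exact ((intervalIntegral.integral_hasDerivAt_right (hE'int r x le_rfl hrx.le)
      hmeas hcx).continuousAt).continuousWithinAt
  have htargetcont : ContinuousOn (fun s => E s * Real.sqrt (φ s)) (Set.Ici l) :=
    (hEcont.mono (Set.Ici_subset_Ici.mpr hl.le)).mul
      (Real.continuous_sqrt.comp_continuousOn hφcont)
  have htargetmeas : AEStronglyMeasurable (fun s => E s * Real.sqrt (φ s))
      (volume.restrict (Set.Ici l)) :=
    htargetcont.aestronglyMeasurable measurableSet_Ici
  -- integrability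
  have hmajint : IntegrableOn (fun s => Real.sqrt δ * g' s) (Set.Ici l) volume := by
    rw [integrableOn_Ici_iff_integrableOn_Ioi]
    exact hg'int.const_mul _
  have hint : IntegrableOn (fun s => E s * Real.sqrt (φ s)) (Set.Ici l) volume := by
    apply Integrable.mono' hmajint htargetmeas
    rw [ae_restrict_iff' measurableSet_Ici]
    filter_upwards with s hs
    rw [Real.norm_eq_abs, abs_of_nonneg (mul_nonneg (Real.exp_pos _).le (Real.sqrt_nonneg _))]
    exact hpt s (hl.le.trans hs)
  refine ⟨hint, ?_⟩
  -- integral bound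
  have step1 : (∫ s in Set.Ici l, E s * Real.sqrt (φ s))
      ≤ ∫ s in Set.Ici l, Real.sqrt δ * g' s :=
    setIntegral_mono_on hint hmajint measurableSet_Ici
      (fun s hs => hpt s (hl.le.trans hs))
  have step2 : (∫ s in Set.Ici l, Real.sqrt δ * g' s)
      = Real.sqrt δ * (2 * Real.sqrt (G l)) := by
    rw [integral_Ici_eq_integral_Ioi, integral_const_mul, hg'val]
  have hGl : Real.sqrt (G l) ≤ Real.sqrt δ / Real.sqrt (φ l) := by
    have h1 : G l ≤ δ / φ l := by
      rw [le_div_iff₀ hφl]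
      linarith [hsup l hl.le, mul_comm (φ l) (G l)]
    calc Real.sqrt (G l) ≤ Real.sqrt (δ / φ l) := Real.sqrt_le_sqrt h1
      _ = Real.sqrt δ / Real.sqrt (φ l) := Real.sqrt_div hδ0 _
  have hsφl : 0 < Real.sqrt (φ l) := Real.sqrt_pos.mpr hφl
  calc (∫ s in Set.Ici l, E s * Real.sqrt (φ s))
      ≤ Real.sqrt δ * (2 * Real.sqrt (G l)) := step1.trans (le_of_eq step2)
    _ ≤ Real.sqrt δ * (2 * (Real.sqrt δ / Real.sqrt (φ l))) := by
        apply mul_le_mul_of_nonneg_left _ (Real.sqrt_nonneg _)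
        exact mul_le_mul_of_nonneg_left hGl (by norm_num)
    _ = (Real.sqrt δ * Real.sqrt δ) * 2 / Real.sqrt (φ l) := by ring
    _ = 2 * δ / Real.sqrt (φ l) := by rw [Real.mul_self_sqrt hδ0]; ring
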